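/- Decoupling of the propagation Hamiltonian: With H_p as above, let V = Σ_{t=0}^{T} |t⟩⟨t| ⊗ (U_t U_{t−1} ⋯ U_1) on ℂ^{T+1} ⊗ W (empty product = Id_W). Then V is unitary and V† H_p V = L ⊗ Id_W, where L is the (T+1) × (T+1) matrix with diagonal entries L_{00} = L_{TT} = 1/2 and L_{tt} = 1 for 0 < t < T, off-diagonal entries L_{t,t+1} = L_{t+1,t} = −1/2, and all other entries zero (i.e., one half of the graph Laplacian of the path on vertices 0, …, T). -/

import Mathlib

open scoped BigOperators

noncomputable section

/-- `histFun T U t` is the composite `U_t ∘ U_{t-1} ∘ ⋯ ∘ U_1` of the first `t`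
circuit unitaries (the empty composite for `t = 0` being the identity). -/
def histFun {W : Type*} [NormedAddCommGroup W] [InnerProductSpace ℂ W]
    (T : ℕ) (U : Fin T → (W ≃ₗᵢ[ℂ] W)) : ℕ → W → W
  | 0 => id
  | n + 1 => if h : n < T then (fun w => U ⟨n, h⟩ (histFun T U n w)) else histFun T U n

/-- Feynman–Kitaev propagation Hamiltonian
`H_p = (1/2) ∑_{t=0}^{T-1} [(|t⟩⟨t| + |t+1⟩⟨t+1|) ⊗ 1 - |t+1⟩⟨t| ⊗ U_{t+1} - |t⟩⟨t+1| ⊗ U_{t+1}†]`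
acting on `ℂ^{T+1} ⊗ W`, realized as the space of functions `Fin (T+1) → W`. -/
def propHam {W : Type*} [NormedAddCommGroup W] [InnerProductSpace ℂ W]
    (T : ℕ) (U : Fin T → (W ≃ₗᵢ[ℂ] W)) :
    ((Fin (T + 1) → W) →ₗ[ℂ] (Fin (T + 1) → W)) :=
  (2 : ℂ)⁻¹ • ∑ t : Fin T,
    ((LinearMap.single ℂ (fun _ : Fin (T + 1) => W) t.castSucc) ∘ₗ
        ((LinearMap.proj t.castSucc : (∀ _ : Fin (T + 1), W) →ₗ[ℂ] W) -
          ((U t).symm.toLinearEquiv.toLinearMap ∘ₗ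
            (LinearMap.proj t.succ : (∀ _ : Fin (T + 1), W) →ₗ[ℂ] W))) +
      (LinearMap.single ℂ (fun _ : Fin (T + 1) => W) t.succ) ∘ₗ
        ((LinearMap.proj t.succ : (∀ _ : Fin (T + 1), W) →ₗ[ℂ] W) -
          ((U t).toLinearEquiv.toLinearMap ∘ₗ
            (LinearMap.proj t.castSucc : (∀ _ : Fin (T + 1), W) →ₗ[ℂ] W))))

/-- One half of the graph Laplacian of the path on vertices `0, …, T`:
diagonal entries `1/2` at the two endpoints and `1` in between, off-diagonal entries
`-1/2` between neighbours. -/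
def neumannChain (T : ℕ) : Matrix (Fin (T + 1)) (Fin (T + 1)) ℝ :=
  fun t s =>
    if t = s then (if t.val = 0 ∨ t.val = T then 1 / 2 else 1)
    else if t.val + 1 = s.val ∨ s.val + 1 = t.val then -(1 / 2) else 0

/-- The basis change `V = ∑_t |t⟩⟨t| ⊗ U_t U_{t-1} ⋯ U_1`. -/
def clockRotation {W : Type*} [NormedAddCommGroup W] [InnerProductSpace ℂ W]
    (T : ℕ) (U : Fin T → (W ≃ₗᵢ[ℂ] W)) :
    (Fin (T + 1) → W) → (Fin (T + 1) → W) :=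
  fun ψ t => histFun T U t.val (ψ t)


section Aux

variable {W : Type*} [NormedAddCommGroup W] [InnerProductSpace ℂ W]

/-- The composite of the first `n` circuit unitaries, as a linear isometry equivalence. -/
def histEquiv (T : ℕ) (U : Fin T → (W ≃ₗᵢ[ℂ] W)) : ℕ → (W ≃ₗᵢ[ℂ] W)
  | 0 => LinearIsometryEquiv.refl ℂ W
  | n + 1 => if h : n < T then (histEquiv T U n).trans (U ⟨n, h⟩) else histEquiv T U n

lemma histFun_eq (T : ℕ) (U : Fin T → (W ≃ₗᵢ[ℂ] W)) (n : ℕ) :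
    histFun T U n = ⇑(histEquiv T U n) := by
  induction n with
  | zero => rfl
  | succ n ih =>
    by_cases h : n < T <;> funext w <;>
      simp [histFun, histEquiv, h, ih]

lemma histEquiv_succ (T : ℕ) (U : Fin T → (W ≃ₗᵢ[ℂ] W)) (t : Fin T) (w : W) :
    histEquiv T U (t.val + 1) w = U t (histEquiv T U t.val w) := by
  have h : t.val < T := t.isLt
  simp [histEquiv, h]

lemma sum_single_ite {n : ℕ} (a : Fin n) (f : Fin n → W) :
    ∑ r : Fin n, (if r = a then f r else 0) = f a :=
  Finset.sum_ite_eq' Finset.univ a f ▸ (by simp)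

set_option maxHeartbeats 1000000 in
/-- Key combinatorial identity for the half path Laplacian. -/
lemma neumann_sum (T : ℕ) (hT : 1 ≤ T) (s : Fin (T + 1)) (x : Fin (T + 1) → W) :
    ∑ r, (neumannChain T s r : ℂ) • x r =
      (2 : ℂ)⁻¹ • ∑ t : Fin T,
        (((if s = t.castSucc then (1 : ℂ) else 0) - (if s = t.succ then 1 else 0)) •
          (x t.castSucc - x t.succ)) := by
  classical
  have hsLt := s.isLt
  have hR : ∀ t : Fin T,
      ((if s = t.castSucc then (1 : ℂ) else 0) - (if s = t.succ then 1 else 0)) •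
          (x t.castSucc - x t.succ) =
        (if s = t.castSucc then x t.castSucc - x t.succ else 0) -
          (if s = t.succ then x t.castSucc - x t.succ else 0) := by
    intro t
    split_ifs <;> simp [sub_smul]
  have hS1 : ∑ t : Fin T, (if s = t.castSucc then x t.castSucc - x t.succ else 0) =
      if hs : (s : ℕ) < T then x s - x ⟨s.val + 1, by omega⟩ else 0 := by
    split_ifs with hs
    · rw [Finset.sum_eq_single (⟨s.val, hs⟩ : Fin T)]
      · rw [if_pos (show s = (⟨s.val, hs⟩ : Fin T).castSucc by apply Fin.ext; rfl)]
        congr 1 <;> exact congrArg x (by apply Fin.ext; rfl)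
      · intro b _ hb
        rw [if_neg]
        intro h
        exact hb (Fin.ext (by simpa using (congrArg Fin.val h).symm))
      · intro h; exact absurd (Finset.mem_univ _) h
    · refine Finset.sum_eq_zero fun t _ => ?_
      rw [if_neg]
      intro h
      have := congrArg Fin.val h
      simp only [Fin.coe_castSucc] at this
      exact hs (this ▸ t.isLt)
  have hS2 : ∑ t : Fin T, (if s = t.succ then x t.castSucc - x t.succ else 0) =
      if hs : 0 < (s : ℕ) then x ⟨s.val - 1, by omega⟩ - x s else 0 := by
    split_ifs with hs
    · rw [Finset.sum_eq_single (⟨s.val - 1, by omega⟩ : Fin T)]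
      · rw [if_pos (show s = (⟨s.val - 1, by omega⟩ : Fin T).succ by
          apply Fin.ext; simp only [Fin.val_succ, Fin.val_mk]; omega)]
        congr 1 <;>
          exact congrArg x (by
            apply Fin.ext
            simp only [Fin.coe_castSucc, Fin.val_succ, Fin.val_mk]
            omega)
      · intro b _ hb
        rw [if_neg]
        intro h
        refine hb (Fin.ext ?_)
        have := congrArg Fin.val h
        simp only [Fin.val_succ] at this
        simp only [Fin.val_mk]
        omega
      · intro h; exact absurd (Finset.mem_univ _) h
    · refine Finset.sum_eq_zero fun t _ => ?_
      rw [if_neg]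
      intro h
      have := congrArg Fin.val h
      simp only [Fin.val_succ] at this
      omega
  have hL : ∀ r : Fin (T + 1), (neumannChain T s r : ℂ) • x r =
      (if r = s then (if (s : ℕ) = 0 ∨ (s : ℕ) = T then (2 : ℂ)⁻¹ else 1) • x r else 0) +
        (if hs : (s : ℕ) < T then
          (if r = (⟨s.val + 1, by omega⟩ : Fin (T + 1)) then (-(2 : ℂ)⁻¹) • x r else 0)
          else 0) +
        (if hs : 0 < (s : ℕ) then
          (if r = (⟨s.val - 1, by omega⟩ : Fin (T + 1)) then (-(2 : ℂ)⁻¹) • x r else 0)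
          else 0) := by
    intro r
    have hrLt := r.isLt
    simp only [neumannChain, Fin.ext_iff, Fin.val_mk]
    split_ifs <;>
      first
        | (exfalso; omega)
        | (push_cast; norm_num)
        | (push_cast; module)
  calc ∑ r, (neumannChain T s r : ℂ) • x r
      = ∑ r : Fin (T + 1),
          ((if r = s then (if (s : ℕ) = 0 ∨ (s : ℕ) = T then (2 : ℂ)⁻¹ else 1) • x r else 0) +
            (if hs : (s : ℕ) < T then
              (if r = (⟨s.val + 1, by omega⟩ : Fin (T + 1)) then (-(2 : ℂ)⁻¹) • x r else 0)
              else 0) +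
            (if hs : 0 < (s : ℕ) then
              (if r = (⟨s.val - 1, by omega⟩ : Fin (T + 1)) then (-(2 : ℂ)⁻¹) • x r else 0)
              else 0)) := Finset.sum_congr rfl fun r _ => hL r
    _ = (2 : ℂ)⁻¹ • ∑ t : Fin T,
          (((if s = t.castSucc then (1 : ℂ) else 0) - (if s = t.succ then 1 else 0)) •
            (x t.castSucc - x t.succ)) := by
        rw [Finset.sum_add_distrib, Finset.sum_add_distrib, sum_single_ite]
        simp only [hR]
        rw [Finset.sum_sub_distrib, hS1, hS2]
        by_cases hsT : (s : ℕ) < T <;> by_cases hs0 : 0 < (s : ℕ)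
        · simp only [dif_pos hsT, dif_pos hs0]
          rw [sum_single_ite, sum_single_ite, if_neg (by omega)]
          module
        · simp only [dif_pos hsT, dif_neg hs0]
          rw [sum_single_ite, Finset.sum_const_zero, if_pos (Or.inl (by omega))]
          module
        · simp only [dif_neg hsT, dif_pos hs0]
          rw [sum_single_ite, Finset.sum_const_zero, if_pos (Or.inr (by omega))]
          module
        · omega

end Aux

/-- **Decoupling of the propagation Hamiltonian.**  The map
`V = ∑_t |t⟩⟨t| ⊗ U_t ⋯ U_1` is unitary (linear, bijective and inner-product
preserving) and conjugates `H_p` into `L ⊗ Id_W`, where `L` is one half of the graph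
Laplacian of the path on the `T+1` clock sites:  `H_p ∘ V = V ∘ (L ⊗ Id_W)`. -/
theorem propHam_decoupling {W : Type*} [NormedAddCommGroup W] [InnerProductSpace ℂ W]
    [FiniteDimensional ℂ W] (T : ℕ) (hT : 1 ≤ T) (U : Fin T → (W ≃ₗᵢ[ℂ] W)) :
    (∀ (a : ℂ) (ψ χ : Fin (T + 1) → W),
      clockRotation T U (a • ψ + χ) = a • clockRotation T U ψ + clockRotation T U χ) ∧
    Function.Bijective (clockRotation T U) ∧
    (∀ ψ χ : Fin (T + 1) → W,
      ∑ t, (inner ℂ (clockRotation T U ψ t) (clockRotation T U χ t) : ℂ) =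
        ∑ t, (inner ℂ (ψ t) (χ t) : ℂ)) ∧
    (∀ ψ : Fin (T + 1) → W,
      propHam T U (clockRotation T U ψ) =
        clockRotation T U (fun t => ∑ s, (neumannChain T t s : ℂ) • ψ s)) := by
  classical
  have hFE : ∀ n, histFun T U n = ⇑(histEquiv T U n) := histFun_eq T U
  have hV : ∀ (ψ : Fin (T + 1) → W) (t : Fin (T + 1)),
      clockRotation T U ψ t = histEquiv T U t.val (ψ t) := by
    intro ψ t; simp [clockRotation, hFE]
  refine ⟨?_, ⟨?_, ?_⟩, ?_, ?_⟩
  · intro a ψ χ; funext t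
    simp [hV, map_add, map_smul]
  · intro ψ χ h; funext t
    exact (histEquiv T U t.val).injective
      (by simpa [hV] using congrFun h t)
  · intro χ
    exact ⟨fun t => (histEquiv T U t.val).symm (χ t), by funext t; simp [hV]⟩
  · intro ψ χ
    refine Finset.sum_congr rfl fun t _ => ?_
    rw [hV, hV, LinearIsometryEquiv.inner_map_map]
  · intro ψ
    funext s
    have main : ∀ t : Fin T,
        Pi.single (M := fun _ : Fin (T + 1) => W) t.castSucc
            (clockRotation T U ψ t.castSucc - (U t).symm (clockRotation T U ψ t.succ)) s +
          Pi.single (M := fun _ : Fin (T + 1) => W) t.succ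
            (clockRotation T U ψ t.succ - U t (clockRotation T U ψ t.castSucc)) s =
        ((if s = t.castSucc then (1 : ℂ) else 0) - (if s = t.succ then 1 else 0)) •
          (histEquiv T U s.val) (ψ t.castSucc - ψ t.succ) := by
      intro t
      have h1 : (U t).symm (clockRotation T U ψ t.succ) =
          histEquiv T U t.val (ψ t.succ) := by
        rw [hV]
        simp only [Fin.val_succ, histEquiv_succ, LinearIsometryEquiv.symm_apply_apply]
      have h2 : U t (clockRotation T U ψ t.castSucc) =
          histEquiv T U (t.val + 1) (ψ t.castSucc) := by
        rw [hV, Fin.coe_castSucc, histEquiv_succ]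
      rw [h1, h2, hV, hV, Pi.single_apply, Pi.single_apply]
      by_cases hc : s = t.castSucc
      · have hsu : s ≠ t.succ := by
          rw [hc]; intro h; have := congrArg Fin.val h; simp at this
        subst hc
        simp [hsu, map_sub]
      · by_cases hsu : s = t.succ
        · subst hsu
          rw [if_neg hc, if_pos rfl, if_neg hc, if_pos rfl, Fin.val_succ, map_sub]
          module
        · simp [hc, hsu]
    have lhs : propHam T U (clockRotation T U ψ) s =
        (2 : ℂ)⁻¹ • ∑ t : Fin T,
          (Pi.single (M := fun _ : Fin (T + 1) => W) t.castSucc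
              (clockRotation T U ψ t.castSucc - (U t).symm (clockRotation T U ψ t.succ)) s +
            Pi.single (M := fun _ : Fin (T + 1) => W) t.succ
              (clockRotation T U ψ t.succ - U t (clockRotation T U ψ t.castSucc)) s) := by
      simp only [propHam, LinearMap.smul_apply, LinearMap.coe_sum, Finset.sum_apply,
        Pi.smul_apply, LinearMap.add_apply, LinearMap.coe_comp, Function.comp_apply,
        LinearMap.sub_apply, LinearMap.proj_apply, LinearMap.coe_single, Pi.add_apply,
        LinearEquiv.coe_coe, LinearIsometryEquiv.coe_toLinearEquiv]
    rw [lhs, hV, neumann_sum T hT s ψ, map_smul, map_sum]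
    congr 1
    refine Finset.sum_congr rfl fun t _ => ?_
    rw [map_smul]
    exact main t


end
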